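/- Let M₁, M₂, …, M_m be square nonzero subrectangular nonnegative real matrices, and let T, T₁, T₂, …, T_m be square nonnegative nonzero real matrices, all of the same size. Set R = T₁·M₁·T₂·M₂⋯T_m·M_m. Then for any two nonnegative nonzero vectors x, y such that ‖xᵀ·R·T‖₁ > 0 and ‖yᵀ·R·T‖₁ > 0, one has ln( (‖xᵀ·R·T‖₁ / ‖yᵀ·R·T‖₁) · (‖yᵀ·R‖₁ / ‖xᵀ·R‖₁) ) ≤ 4·ln((1 + τ(M₁))/(1 − τ(M₁))) · ∏_{ℓ=2}^{m} τ(M_ℓ). -/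

import Mathlib

set_option linter.unusedSectionVars false
set_option linter.unusedVariables false
open Real

/-- A nonnegative matrix is *subrectangular* if `M i j ≠ 0` and `M k l ≠ 0` imply
`M i l ≠ 0` and `M k j ≠ 0`. -/
def Subrectangular {m n : Type*} (M : Matrix m n ℝ) : Prop :=
  ∀ i j k l, M i j ≠ 0 → M k l ≠ 0 → M i l ≠ 0 ∧ M k j ≠ 0

/-- `φ(M)`: minimum of `(M i j · M k l)/(M i l · M k j)` over nonzero rows `i, k` and
nonzero columns `j, l` of `M`. -/
noncomputable def phi {m n : Type*} (M : Matrix m n ℝ) : ℝ :=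
  sInf {r : ℝ | ∃ i k j l,
    (∃ j', M i j' ≠ 0) ∧ (∃ j', M k j' ≠ 0) ∧ (∃ i', M i' j ≠ 0) ∧ (∃ i', M i' l ≠ 0) ∧
    r = (M i j * M k l) / (M i l * M k j)}

/-- The Birkhoff contraction coefficient `τ(M) = (1 − √φ(M))/(1 + √φ(M))`. -/
noncomputable def tau {m n : Type*} (M : Matrix m n ℝ) : ℝ :=
  (1 - Real.sqrt (phi M)) / (1 + Real.sqrt (phi M))

section PhiFacts

variable {ι κ : Type*} [Fintype ι] [Fintype κ] {M : Matrix ι κ ℝ}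

def phiSet (M : Matrix ι κ ℝ) : Set ℝ :=
  {r : ℝ | ∃ i k j l,
    (∃ j', M i j' ≠ 0) ∧ (∃ j', M k j' ≠ 0) ∧ (∃ i', M i' j ≠ 0) ∧ (∃ i', M i' l ≠ 0) ∧
    r = (M i j * M k l) / (M i l * M k j)}

lemma phi_eq : phi M = sInf (phiSet M) := rfl

lemma phiSet_finite (M : Matrix ι κ ℝ) : (phiSet M).Finite := by
  apply Set.Finite.subset (Set.finite_range
    (fun q : ι × ι × κ × κ => (M q.1 q.2.2.1 * M q.2.1 q.2.2.2) / (M q.1 q.2.2.2 * M q.2.1 q.2.2.1)))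
  rintro r ⟨i, k, j, l, _, _, _, _, rfl⟩
  exact ⟨(i, k, j, l), rfl⟩

lemma phiSet_bddBelow (M : Matrix ι κ ℝ) : BddBelow (phiSet M) :=
  (phiSet_finite M).bddBelow

lemma matrix_ne_zero_iff {M : Matrix ι κ ℝ} : M ≠ 0 ↔ ∃ i j, M i j ≠ 0 := by
  constructor
  · intro h
    by_contra hc
    push_neg at hc
    exact h (by ext i j; simpa using hc i j)
  · rintro ⟨i, j, hij⟩ h
    exact hij (by simp [h])

lemma phiSet_nonempty (hne : M ≠ 0) : (phiSet M).Nonempty := by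
  obtain ⟨i, j, hij⟩ := matrix_ne_zero_iff.mp hne
  refine ⟨1, i, i, j, j, ⟨j, hij⟩, ⟨j, hij⟩, ⟨i, hij⟩, ⟨i, hij⟩, ?_⟩
  rw [div_self (by exact mul_ne_zero hij hij)]

lemma phiSet_pos (hpos : ∀ i j, 0 ≤ M i j) (hsr : Subrectangular M) :
    ∀ r ∈ phiSet M, 0 < r := by
  rintro r ⟨i, k, j, l, ⟨j₁, h1⟩, ⟨j₂, h2⟩, ⟨i₁, h3⟩, ⟨i₂, h4⟩, rfl⟩
  have hij : M i j ≠ 0 := (hsr i j₁ i₁ j h1 h3).1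
  have hkl : M k l ≠ 0 := (hsr k j₂ i₂ l h2 h4).1
  have hil : M i l ≠ 0 := (hsr i j₁ i₂ l h1 h4).1
  have hkj : M k j ≠ 0 := (hsr k j₂ i₁ j h2 h3).1
  have : ∀ a b, M a b ≠ 0 → 0 < M a b := fun a b h => lt_of_le_of_ne (hpos a b) (Ne.symm h)
  exact div_pos (mul_pos (this _ _ hij) (this _ _ hkl)) (mul_pos (this _ _ hil) (this _ _ hkj))

lemma phi_pos (hpos : ∀ i j, 0 ≤ M i j) (hne : M ≠ 0) (hsr : Subrectangular M) :
    0 < phi M := by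
  rw [phi_eq]
  exact phiSet_pos hpos hsr _ ((phiSet_nonempty hne).csInf_mem (phiSet_finite M))

lemma phi_le_one (hne : M ≠ 0) : phi M ≤ 1 := by
  obtain ⟨i, j, hij⟩ := matrix_ne_zero_iff.mp hne
  rw [phi_eq]
  apply csInf_le (phiSet_bddBelow M)
  exact ⟨i, i, j, j, ⟨j, hij⟩, ⟨j, hij⟩, ⟨i, hij⟩, ⟨i, hij⟩,
    (div_self (mul_ne_zero hij hij)).symm⟩

lemma cross_bound (hpos : ∀ i j, 0 ≤ M i j) (hne : M ≠ 0) (hsr : Subrectangular M)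
    (i k : ι) (j l : κ) : phi M * (M i j * M k l) ≤ M i l * M k j := by
  rcases eq_or_ne (M i j * M k l) 0 with h0 | h0
  · rw [h0, mul_zero]
    exact mul_nonneg (hpos i l) (hpos k j)
  · have hij : M i j ≠ 0 := fun h => h0 (by rw [h, zero_mul])
    have hkl : M k l ≠ 0 := fun h => h0 (by rw [h, mul_zero])
    have hmem : (M i l * M k j) / (M i j * M k l) ∈ phiSet M :=
      ⟨i, k, l, j, ⟨j, hij⟩, ⟨l, hkl⟩, ⟨k, hkl⟩, ⟨i, hij⟩, rfl⟩
    have hle : phi M ≤ (M i l * M k j) / (M i j * M k l) := csInf_le (phiSet_bddBelow M) hmem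
    have hp0 : 0 < M i j * M k l :=
      lt_of_le_of_ne (mul_nonneg (hpos i j) (hpos k l)) (Ne.symm h0)
    calc phi M * (M i j * M k l) ≤ (M i l * M k j) / (M i j * M k l) * (M i j * M k l) :=
          mul_le_mul_of_nonneg_right hle hp0.le
      _ = M i l * M k j := div_mul_cancel₀ _ hp0.ne'

lemma sqrt_phi_pos (hpos : ∀ i j, 0 ≤ M i j) (hne : M ≠ 0) (hsr : Subrectangular M) :
    0 < Real.sqrt (phi M) := Real.sqrt_pos.mpr (phi_pos hpos hne hsr)

lemma sqrt_phi_le_one (hne : M ≠ 0) : Real.sqrt (phi M) ≤ 1 :=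
  Real.sqrt_le_one.mpr (phi_le_one hne)

lemma tau_nonneg (hne : M ≠ 0) : 0 ≤ tau M := by
  have h1 := sqrt_phi_le_one (M := M) hne
  have h2 := Real.sqrt_nonneg (phi M)
  unfold tau
  apply div_nonneg <;> linarith

lemma tau_eq_div (M : Matrix ι κ ℝ) :
    tau M = (1 - Real.sqrt (phi M)) / (1 + Real.sqrt (phi M)) := rfl

lemma log_one_add_tau_div (hpos : ∀ i j, 0 ≤ M i j) (hne : M ≠ 0) (hsr : Subrectangular M) :
    Real.log ((1 + tau M) / (1 - tau M)) = -(1/2) * Real.log (phi M) := by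
  have hp := sqrt_phi_pos hpos hne hsr
  have hp1 := sqrt_phi_le_one (M := M) hne
  have hratio : (1 + tau M) / (1 - tau M) = (Real.sqrt (phi M))⁻¹ := by
    have hq : Real.sqrt (phi M) ≠ 0 := hp.ne'
    have h1q : (1:ℝ) + Real.sqrt (phi M) ≠ 0 := by positivity
    rw [tau_eq_div]
    field_simp
    ring_nf
    exact mul_inv_cancel₀ hq
  rw [hratio, Real.log_inv, Real.log_sqrt (phi_pos hpos hne hsr).le]
  ring

end PhiFacts

lemma core_ineq {p : ℝ} (hp : 0 < p) (hp1 : p ≤ 1) {u : ℝ} (hu : 1 ≤ u) :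
    u + p ≤ u ^ ((1-p)/(1+p)) * (1 + u * p) := by
  set τ : ℝ := (1-p)/(1+p) with hτ
  have hp1' : (0:ℝ) < 1 + p := by linarith
  have hτ0 : 0 ≤ τ := by
    apply div_nonneg <;> linarith
  set F : ℝ → ℝ := fun t => τ * Real.log t + Real.log (1 + t*p) - Real.log (t + p) with hF
  have hder : ∀ t : ℝ, 0 < t →
      HasDerivAt F (τ * t⁻¹ + p/(1+t*p) - 1/(t+p)) t := by
    intro t ht
    have h1 : (0:ℝ) < 1 + t*p := by nlinarith
    have h2 : (0:ℝ) < t + p := by linarith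
    have d1 : HasDerivAt (fun s : ℝ => τ * Real.log s) (τ * t⁻¹) t :=
      (Real.hasDerivAt_log ht.ne').const_mul τ
    have d2 : HasDerivAt (fun s : ℝ => Real.log (1 + s*p)) (p/(1+t*p)) t := by
      have : HasDerivAt (fun s : ℝ => 1 + s*p) p t := by
        simpa using ((hasDerivAt_id t).mul_const p).const_add 1
      simpa using this.log h1.ne'
    have d3 : HasDerivAt (fun s : ℝ => Real.log (s + p)) (1/(t+p)) t := by
      have : HasDerivAt (fun s : ℝ => s + p) 1 t := (hasDerivAt_id t).add_const p
      simpa using this.log h2.ne'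
    exact (d1.add d2).sub d3
  have hmono : MonotoneOn F (Set.Ici 1) := by
    apply monotoneOn_of_deriv_nonneg (convex_Ici 1)
    · intro t ht
      exact (hder t (lt_of_lt_of_le one_pos ht)).continuousAt.continuousWithinAt
    · intro t ht
      rw [interior_Ici] at ht
      exact (hder t (lt_trans one_pos ht)).differentiableAt.differentiableWithinAt
    · intro t ht
      rw [interior_Ici] at ht
      have ht1 : (1:ℝ) < t := ht
      have ht0 : (0:ℝ) < t := lt_trans one_pos ht1
      rw [(hder t ht0).deriv]
      have h1 : (0:ℝ) < 1 + t*p := by nlinarith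
      have h2 : (0:ℝ) < t + p := by linarith
      have key : τ * t⁻¹ + p/(1+t*p) - 1/(t+p)
          = p*(1-p)*(t-1)^2 / ((1+p)*(t*((t+p)*(1+t*p)))) := by
        rw [hτ]; field_simp; ring
      rw [key]
      apply div_nonneg
      · exact mul_nonneg (mul_nonneg hp.le (by linarith : (0:ℝ) ≤ 1-p)) (sq_nonneg (t-1))
      · positivity
  have hF1 : F 1 = 0 := by simp [hF]
  have hFu : 0 ≤ F u := by
    rw [← hF1]
    exact hmono (by simp) (by simpa using hu) hu
  have hu0 : (0:ℝ) < u := lt_of_lt_of_le one_pos hu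
  have h1 : (0:ℝ) < 1 + u*p := by nlinarith
  have h2 : (0:ℝ) < u + p := by linarith
  have hrp : (0:ℝ) < u ^ τ := Real.rpow_pos_of_pos hu0 τ
  have hlog : Real.log (u + p) ≤ Real.log (u ^ τ * (1 + u*p)) := by
    rw [Real.log_mul hrp.ne' h1.ne', Real.log_rpow hu0]
    simp only [hF] at hFu
    linarith
  exact (Real.log_le_log_iff h2 (by positivity)).mp hlog
lemma quad_key {p D σ : ℝ} (hp : 0 < p) (hp1 : p ≤ 1) (hD : 1 ≤ D) (hσ : 0 ≤ σ) :
    (p^2 + D*σ)*(1+σ) ≤ D^((1-p)/(1+p)) * ((p^2+σ)*(1+D*σ)) := by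
  set τ : ℝ := (1-p)/(1+p) with hτ
  have hτ0 : 0 ≤ τ := by apply div_nonneg <;> linarith
  have hD0 : (0:ℝ) ≤ D := by linarith
  set u : ℝ := Real.sqrt D with hud
  have huu : u * u = D := Real.mul_self_sqrt hD0
  have hun : 0 ≤ u := Real.sqrt_nonneg D
  have hu : 1 ≤ u := by nlinarith
  have hcore := core_ineq hp hp1 hu
  have hKdef : D ^ τ = u ^ τ * u ^ τ := by
    rw [← huu, Real.mul_rpow hun hun]
  set K : ℝ := D ^ τ with hKd
  have hK1 : 1 ≤ K := Real.one_le_rpow hD hτ0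
  have hB : (u+p)*(u+p) ≤ K*((1+u*p)*(1+u*p)) := by
    have h0 : 0 ≤ u + p := by linarith
    have := mul_le_mul hcore hcore h0 (by positivity)
    calc (u+p)*(u+p) ≤ (u ^ τ * (1 + u * p)) * (u ^ τ * (1 + u * p)) := this
      _ = K*((1+u*p)*(1+u*p)) := by rw [hKdef]; ring
  have h1 : 0 ≤ σ * (K*((1+u*p)*(1+u*p)) - (u+p)*(u+p)) :=
    mul_nonneg hσ (by linarith)
  have h2 : 0 ≤ (K-1) * (u*σ-p)^2 := mul_nonneg (by linarith) (sq_nonneg _)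
  rw [← huu]
  nlinarith [h1, h2]

lemma region {p D K r σ : ℝ} (hp : 0 < p) (hp1 : p ≤ 1) (hD : 1 ≤ D)
    (hK : K = D^((1-p)/(1+p))) (hσ : 0 ≤ σ) (hr : 0 ≤ r) (hrσ : r ≤ σ) :
    (p^2 + D*r)*(1+σ) ≤ K*((p^2+r)*(1+D*σ)) := by
  have hτ0 : 0 ≤ (1-p)/(1+p) := by apply div_nonneg <;> linarith
  have hK1 : 1 ≤ K := hK ▸ Real.one_le_rpow hD hτ0
  have hmax : (p^2 + D*σ)*(1+σ) ≤ K*((p^2+σ)*(1+D*σ)) := hK ▸ quad_key hp hp1 hD hσ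
  have h0 : (p^2 + D*0)*(1+σ) ≤ K*((p^2+0)*(1+D*σ)) := by
    have hs : 1+σ ≤ K*(1+D*σ) := by
      nlinarith [mul_nonneg hσ (sub_nonneg.mpr hD),
        mul_nonneg (sub_nonneg.mpr hK1) (by nlinarith : (0:ℝ) ≤ 1 + D*σ)]
    nlinarith [mul_le_mul_of_nonneg_left hs (sq_nonneg p)]
  -- affine in r
  rcases le_or_gt (D*(1+σ) - K*(1+D*σ)) 0 with hc | hc
  · nlinarith [mul_nonneg hr (neg_nonneg.mpr hc)]
  · nlinarith [mul_nonneg (sub_nonneg.mpr hrσ) hc.le]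

lemma poly_key {p m M P₁ Q₁ P₂ Q₂ : ℝ} (hp : 0<p) (hp1 : p≤1) (hm : 0 < m) (hmM : m ≤ M)
    (hP₁ : 0≤P₁) (hQ₁ : 0≤Q₁) (hP₂ : 0≤P₂) (hQ₂ : 0≤Q₂)
    (hcon : p^2*(Q₁*P₂) ≤ Q₂*P₁) :
    (m*P₁+M*Q₁)*(P₂+Q₂) ≤ (M/m)^((1-p)/(1+p)) * ((P₁+Q₁)*(m*P₂+M*Q₂)) := by
  have hτ0 : 0 ≤ (1-p)/(1+p) := by apply div_nonneg <;> linarith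
  have hD : 1 ≤ M/m := (one_le_div hm).mpr hmM
  generalize hDd : M/m = D at hD ⊢
  have hM : M = m * D := by rw [← hDd]; field_simp
  rw [hM] at hmM ⊢
  clear hM hDd
  set K : ℝ := D ^ ((1-p)/(1+p)) with hKd
  have hK1 : 1 ≤ K := Real.one_le_rpow hD hτ0
  have hM0 : 0 < m*D := lt_of_lt_of_le hm hmM
  rcases eq_or_lt_of_le hP₂ with hP2z | hP2
  · -- P₂ = 0
    rw [← hP2z]
    have h1 : m*P₁+(m*D)*Q₁ ≤ (m*D)*(P₁+Q₁) := by nlinarith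
    nlinarith [mul_nonneg (mul_nonneg (sub_nonneg.mpr hK1) (add_nonneg hP₁ hQ₁))
        (mul_nonneg hM0.le hQ₂),
      mul_le_mul_of_nonneg_right h1 hQ₂]
  rcases eq_or_lt_of_le hP₁ with hP1z | hP1
  · -- P₁ = 0, hence Q₁ = 0
    rw [← hP1z] at hcon ⊢
    have hQ1z : Q₁ = 0 := by
      by_contra h
      have hq : 0 < Q₁ := lt_of_le_of_ne hQ₁ (Ne.symm h)
      have h2 : 0 < p^2*(Q₁*P₂) := by positivity
      nlinarith
    rw [hQ1z]
    have h3 : (0:ℝ) ≤ K * ((0+0)*(m*P₂+(m*D)*Q₂)) := by positivity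
    nlinarith [h3]
  · -- main case
    have hreg := region hp hp1 hD hKd (div_nonneg hQ₂ hP₂)
      (by positivity : 0 ≤ p^2*Q₁/P₁)
      (by rw [div_le_div_iff₀ hP1 hP2]; nlinarith : p^2*Q₁/P₁ ≤ Q₂/P₂)
    have e1 : (m*P₁+(m*D)*Q₁)*(P₂+Q₂)
        = ((p^2 + D*(p^2*Q₁/P₁))*(1+Q₂/P₂)) * (m*P₁*P₂/p^2) := by
      field_simp
    have e2 : K * ((P₁+Q₁)*(m*P₂+(m*D)*Q₂))
        = (K*((p^2+p^2*Q₁/P₁)*(1+D*(Q₂/P₂)))) * (m*P₁*P₂/p^2) := by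
      field_simp
    rw [e1, e2]
    exact mul_le_mul_of_nonneg_right hreg (by positivity)

section Vec

variable {n : Type*} [Fintype n]

/-- cross-ratio comparability relation between two vectors -/
def CRel (K : ℝ) (a b : n → ℝ) : Prop := ∀ j l, a j * b l ≤ K * (a l * b j)

lemma vecMul_apply (z : n → ℝ) (A : Matrix n n ℝ) (j : n) :
    Matrix.vecMul z A j = ∑ i, z i * A i j := by
  simp [Matrix.vecMul, dotProduct]

lemma vecMul_nonneg {z : n → ℝ} {A : Matrix n n ℝ} (hz : ∀ i, 0 ≤ z i)
    (hA : ∀ i j, 0 ≤ A i j) (j : n) : 0 ≤ Matrix.vecMul z A j := by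
  rw [vecMul_apply]
  exact Finset.sum_nonneg fun i _ => mul_nonneg (hz i) (hA i j)

variable {A : Matrix n n ℝ}

lemma phi_sum (hpos : ∀ i j, 0 ≤ A i j) (hne : A ≠ 0) (hsr : Subrectangular A)
    {u v : n → ℝ} (hu : ∀ i, 0 ≤ u i) (hv : ∀ i, 0 ≤ v i) (s₁ s₂ : Finset n) (j l : n) :
    phi A * ((∑ i ∈ s₁, u i * A i j) * (∑ k ∈ s₂, v k * A k l))
      ≤ (∑ i ∈ s₁, u i * A i l) * (∑ k ∈ s₂, v k * A k j) := by
  rw [Finset.sum_mul_sum, Finset.sum_mul_sum, Finset.mul_sum]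
  apply Finset.sum_le_sum
  intro i _
  rw [Finset.mul_sum]
  apply Finset.sum_le_sum
  intro k _
  have h := mul_le_mul_of_nonneg_left (cross_bound hpos hne hsr i k j l)
    (mul_nonneg (hu i) (hv k))
  ring_nf at h ⊢
  linarith [h]

lemma rel_base (hpos : ∀ i j, 0 ≤ A i j) (hne : A ≠ 0) (hsr : Subrectangular A)
    {u v : n → ℝ} (hu : ∀ i, 0 ≤ u i) (hv : ∀ i, 0 ≤ v i) :
    CRel (phi A)⁻¹ (Matrix.vecMul u A) (Matrix.vecMul v A) := by
  intro j l
  have hφ := phi_pos hpos hne hsr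
  have h := phi_sum hpos hne hsr hu hv Finset.univ Finset.univ j l
  rw [← vecMul_apply, ← vecMul_apply, ← vecMul_apply, ← vecMul_apply] at h
  have h2 : Matrix.vecMul u A j * Matrix.vecMul v A l
      = (phi A)⁻¹ * (phi A * (Matrix.vecMul u A j * Matrix.vecMul v A l)) := by
    field_simp
  rw [h2]
  exact mul_le_mul_of_nonneg_left h (inv_nonneg.mpr hφ.le)

lemma rel_support {K : ℝ} {a b : n → ℝ} (ha : ∀ i, 0 ≤ a i)
    (hb : ∀ i, 0 ≤ b i) (hane : a ≠ 0) (hbne : b ≠ 0) (hrel : CRel K a b) :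
    ∀ i, (a i = 0 ↔ b i = 0) := by
  intro i
  constructor
  · intro hai
    obtain ⟨k, hk⟩ := Function.ne_iff.mp hane
    have hak : 0 < a k := lt_of_le_of_ne (ha k) (Ne.symm (by simpa using hk))
    have h := hrel k i
    rw [hai] at h
    simp only [zero_mul, mul_zero] at h
    nlinarith [hb i]
  · intro hbi
    obtain ⟨k, hk⟩ := Function.ne_iff.mp hbne
    have hbk : 0 < b k := lt_of_le_of_ne (hb k) (Ne.symm (by simpa using hk))
    have h := hrel i k
    rw [hbi] at h
    simp only [zero_mul, mul_zero] at h
    nlinarith [ha i]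

lemma rel_matmul {K : ℝ} {a b : n → ℝ} {T : Matrix n n ℝ}
    (hT : ∀ i j, 0 ≤ T i j) (hrel : CRel K a b) :
    CRel K (Matrix.vecMul a T) (Matrix.vecMul b T) := by
  intro j l
  calc Matrix.vecMul a T j * Matrix.vecMul b T l
      = ∑ p, ∑ q, (a p * b q) * (T p j * T q l) := by
        rw [vecMul_apply, vecMul_apply, Finset.sum_mul_sum]
        exact Finset.sum_congr rfl fun p _ => Finset.sum_congr rfl fun q _ => by ring
    _ ≤ ∑ p, ∑ q, (K * (a q * b p)) * (T p j * T q l) :=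
        Finset.sum_le_sum fun p _ => Finset.sum_le_sum fun q _ =>
          mul_le_mul_of_nonneg_right (hrel p q) (mul_nonneg (hT p j) (hT q l))
    _ = K * (Matrix.vecMul a T l * Matrix.vecMul b T j) := by
        rw [Finset.sum_comm, vecMul_apply, vecMul_apply, Finset.sum_mul_sum, Finset.mul_sum]
        refine Finset.sum_congr rfl fun q _ => ?_
        rw [Finset.mul_sum]
        exact Finset.sum_congr rfl fun p _ => by ring

lemma birkhoff_step (hpos : ∀ i j, 0 ≤ A i j) (hne : A ≠ 0) (hsr : Subrectangular A)
    {u v : n → ℝ} (hu : ∀ i, 0 ≤ u i) (hv : ∀ i, 0 ≤ v i)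
    {m M : ℝ} (hm : 0 < m) (hmM : m ≤ M)
    (hlow : ∀ i, m * v i ≤ u i) (hhigh : ∀ i, u i ≤ M * v i) :
    CRel ((M/m) ^ tau A) (Matrix.vecMul u A) (Matrix.vecMul v A) := by
  intro j l
  classical
  have hp : 0 < Real.sqrt (phi A) := Real.sqrt_pos.mpr (phi_pos hpos hne hsr)
  have hp1 : Real.sqrt (phi A) ≤ 1 := Real.sqrt_le_one.mpr (phi_le_one hne)
  have hp2 : Real.sqrt (phi A) ^ 2 = phi A := Real.sq_sqrt (phi_pos hpos hne hsr).le
  set K : ℝ := (M/m) ^ tau A with hK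
  set Y : n → ℝ := Matrix.vecMul v A with hYd
  set c : n → ℝ := fun i => A i j * Y l - K * (A i l * Y j) with hc
  set s : Finset n := Finset.univ.filter (fun i => 0 ≤ c i) with hs
  set s' : Finset n := Finset.univ.filter (fun i => ¬ 0 ≤ c i) with hs'
  have hgen : ∀ (t : Finset n) (z : n → ℝ), ∑ i ∈ t, z i * c i
      = (∑ i ∈ t, z i * A i j) * Y l - K * ((∑ i ∈ t, z i * A i l) * Y j) := by
    intro t z
    rw [Finset.sum_mul, Finset.sum_mul, Finset.mul_sum, ← Finset.sum_sub_distrib]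
    exact Finset.sum_congr rfl fun i _ => by simp only [hc]; ring
  set Q : ℝ → Prop := fun _ => True with hQtriv -- dummy
  have hsplitsum : ∀ (z : n → ℝ), ∑ i ∈ s, z i * c i + ∑ i ∈ s', z i * c i
      = ∑ i, z i * c i := fun z =>
    Finset.sum_filter_add_sum_filter_not Finset.univ _ _
  have hb1 : ∑ i ∈ s, u i * c i ≤ ∑ i ∈ s, (M * v i) * c i := by
    apply Finset.sum_le_sum
    intro i hi
    rw [hs, Finset.mem_filter] at hi
    exact mul_le_mul_of_nonneg_right (hhigh i) hi.2
  have hb2 : ∑ i ∈ s', u i * c i ≤ ∑ i ∈ s', (m * v i) * c i := by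
    apply Finset.sum_le_sum
    intro i hi
    rw [hs', Finset.mem_filter] at hi
    exact mul_le_mul_of_nonpos_right (hlow i) (le_of_not_ge hi.2)
  have hMrw : ∀ (t : Finset n) (r : ℝ), ∑ i ∈ t, (r * v i) * c i = r * ∑ i ∈ t, v i * c i := by
    intro t r
    rw [Finset.mul_sum]
    exact Finset.sum_congr rfl fun i _ => by ring
  -- abbreviations
  have hPQ : ∀ j', 0 ≤ ∑ i ∈ s, v i * A i j' ∧ 0 ≤ ∑ i ∈ s', v i * A i j' :=
    fun j' => ⟨Finset.sum_nonneg fun i _ => mul_nonneg (hv i) (hpos i j'),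
      Finset.sum_nonneg fun i _ => mul_nonneg (hv i) (hpos i j')⟩
  have hcon : Real.sqrt (phi A) ^ 2 * ((∑ i ∈ s, v i * A i j) * (∑ i ∈ s', v i * A i l))
      ≤ (∑ i ∈ s, v i * A i l) * (∑ i ∈ s', v i * A i j) := by
    rw [hp2]
    exact phi_sum hpos hne hsr hv hv s s' j l
  have hpk := poly_key hp hp1 hm hmM (hPQ j).2 (hPQ j).1 (hPQ l).2 (hPQ l).1 hcon
  have hKeq : (M/m) ^ ((1 - Real.sqrt (phi A))/(1 + Real.sqrt (phi A))) = K := by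
    rw [hK, tau_eq_div]
  rw [hKeq] at hpk
  have hYsplit : ∀ j', Y j' = ∑ i ∈ s, v i * A i j' + ∑ i ∈ s', v i * A i j' := by
    intro j'
    rw [hYd, vecMul_apply, ← Finset.sum_filter_add_sum_filter_not Finset.univ
      (fun i => 0 ≤ c i) (fun i => v i * A i j')]
  have hfinal : ∑ i, u i * c i ≤ 0 := by
    rw [← hsplitsum u]
    have hstep : ∑ i ∈ s, u i * c i + ∑ i ∈ s', u i * c i
        ≤ M * ∑ i ∈ s, v i * c i + m * ∑ i ∈ s', v i * c i := by
      rw [← hMrw s M, ← hMrw s' m]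
      exact add_le_add hb1 hb2
    rw [hgen s v, hgen s' v, hYsplit j, hYsplit l] at hstep
    refine le_trans hstep ?_
    nlinarith [hpk]
  have hexp := hgen Finset.univ u
  rw [← vecMul_apply, ← vecMul_apply] at hexp
  rw [hexp] at hfinal
  linarith

end Vec


section Step

variable {n : Type*} [Fintype n] {A : Matrix n n ℝ}

lemma tau_nonneg2 (hne : A ≠ 0) : 0 ≤ tau A := by
  have hp1 : Real.sqrt (phi A) ≤ 1 := Real.sqrt_le_one.mpr (phi_le_one hne)
  have hp0 := Real.sqrt_nonneg (phi A)
  rw [tau_eq_div]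
  apply div_nonneg <;> linarith

lemma crel_step (hpos : ∀ i j, 0 ≤ A i j) (hne : A ≠ 0) (hsr : Subrectangular A)
    {u v : n → ℝ} (hu : ∀ i, 0 ≤ u i) (hv : ∀ i, 0 ≤ v i)
    (hune : u ≠ 0) (hvne : v ≠ 0) {K : ℝ} (hK1 : 1 ≤ K) (hrel : CRel K u v) :
    CRel (K ^ tau A) (Matrix.vecMul u A) (Matrix.vecMul v A) := by
  classical
  have hτ0 : 0 ≤ tau A := tau_nonneg2 hne
  have hsupp := rel_support hu hv hune hvne hrel
  set t : Finset n := Finset.univ.filter (fun i => v i ≠ 0) with ht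
  have htne : t.Nonempty := by
    obtain ⟨i, hi⟩ := Function.ne_iff.mp hvne
    refine ⟨i, ?_⟩
    rw [ht, Finset.mem_filter]
    exact ⟨Finset.mem_univ i, by simpa using hi⟩
  have hvpos : ∀ i ∈ t, 0 < v i := by
    intro i hi
    rw [ht, Finset.mem_filter] at hi
    exact lt_of_le_of_ne (hv i) (Ne.symm hi.2)
  have hupos : ∀ i ∈ t, 0 < u i := by
    intro i hi
    have hi' := hi
    rw [ht, Finset.mem_filter] at hi'
    have : u i ≠ 0 := fun h => hi'.2 ((hsupp i).mp h)
    exact lt_of_le_of_ne (hu i) (Ne.symm this)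
  set m₀ : ℝ := t.inf' htne (fun i => u i / v i) with hm₀d
  set M₀ : ℝ := t.sup' htne (fun i => u i / v i) with hM₀d
  have hm₀ : 0 < m₀ := by
    rw [hm₀d, Finset.lt_inf'_iff]
    exact fun i hi => div_pos (hupos i hi) (hvpos i hi)
  have hmM : m₀ ≤ M₀ := by
    obtain ⟨i0, hi0⟩ := htne
    exact le_trans (Finset.inf'_le _ hi0) (Finset.le_sup' (fun i => u i / v i) hi0)
  have hlow : ∀ i, m₀ * v i ≤ u i := by
    intro i
    by_cases hvi : v i = 0
    · rw [hvi, mul_zero]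
      exact hu i
    · have hi : i ∈ t := by
        rw [ht, Finset.mem_filter]
        exact ⟨Finset.mem_univ i, hvi⟩
      exact (le_div_iff₀ (hvpos i hi)).mp (Finset.inf'_le _ hi)
  have hhigh : ∀ i, u i ≤ M₀ * v i := by
    intro i
    by_cases hvi : v i = 0
    · rw [(hsupp i).mpr hvi, hvi, mul_zero]
    · have hi : i ∈ t := by
        rw [ht, Finset.mem_filter]
        exact ⟨Finset.mem_univ i, hvi⟩
      exact (div_le_iff₀ (hvpos i hi)).mp (Finset.le_sup' (fun i => u i / v i) hi)
  have hDK : M₀ / m₀ ≤ K := by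
    obtain ⟨iM, hiM, hMeq⟩ := Finset.exists_mem_eq_sup' htne (fun i => u i / v i)
    obtain ⟨im, him, hmeq⟩ := Finset.exists_mem_eq_inf' htne (fun i => u i / v i)
    rw [div_le_iff₀ hm₀, hM₀d, hMeq, hm₀d, hmeq]
    rw [div_le_iff₀ (hvpos iM hiM)]
    have e : K * (u im / v im) * v iM = K * (u im * v iM) / v im := by
      field_simp [(hvpos im him).ne']
    rw [e, le_div_iff₀ (hvpos im him)]
    exact hrel iM im
  have hbs := birkhoff_step hpos hne hsr hu hv hm₀ hmM hlow hhigh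
  intro j l
  have h2 : (M₀/m₀) ^ tau A ≤ K ^ tau A :=
    Real.rpow_le_rpow (div_nonneg (le_trans hm₀.le hmM) hm₀.le) hDK hτ0
  exact le_trans (hbs j l) (mul_le_mul_of_nonneg_right h2
    (mul_nonneg (vecMul_nonneg hu hpos l) (vecMul_nonneg hv hpos j)))

end Step

/-- The ordered product `R = T₁·M₁·T₂·M₂ ⋯ T_s·M_s`. -/
def prodTM {n : Type*} [Fintype n] [DecidableEq n]
    (T M : ℕ → Matrix n n ℝ) (s : ℕ) : Matrix n n ℝ :=
  ((List.range s).map fun ℓ => T (ℓ + 1) * M (ℓ + 1)).prod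

section ProdTM

variable {n : Type*} [Fintype n] [DecidableEq n] (T M : ℕ → Matrix n n ℝ)

lemma prodTM_zero : prodTM T M 0 = 1 := by simp [prodTM]

lemma prodTM_succ (s : ℕ) :
    prodTM T M (s+1) = prodTM T M s * (T (s+1) * M (s+1)) := by
  rw [prodTM, prodTM, List.range_succ, List.map_append, List.prod_append]
  simp

lemma matmul_nonneg {A B : Matrix n n ℝ} (hA : ∀ i j, 0 ≤ A i j)
    (hB : ∀ i j, 0 ≤ B i j) : ∀ i j, 0 ≤ (A * B) i j := by
  intro i j
  rw [Matrix.mul_apply]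
  exact Finset.sum_nonneg fun k _ => mul_nonneg (hA i k) (hB k j)

lemma prodTM_nonneg (s : ℕ) (hT : ∀ ℓ, 1 ≤ ℓ → ℓ ≤ s → ∀ i j, 0 ≤ T ℓ i j)
    (hM : ∀ ℓ, 1 ≤ ℓ → ℓ ≤ s → ∀ i j, 0 ≤ M ℓ i j) :
    ∀ i j, 0 ≤ prodTM T M s i j := by
  induction s with
  | zero =>
    intro i j
    rw [prodTM_zero, Matrix.one_apply]
    split <;> norm_num
  | succ t ih =>
    rw [prodTM_succ]
    exact matmul_nonneg
      (ih (fun ℓ h1 h2 => hT ℓ h1 (by omega)) (fun ℓ h1 h2 => hM ℓ h1 (by omega)))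
      (matmul_nonneg (hT (t+1) (by omega) (by omega)) (hM (t+1) (by omega) (by omega)))

end ProdTM

lemma bilinear_bound {n : Type*} [Fintype n] {K : ℝ} {a b c : n → ℝ}
    (hc : ∀ i, 0 ≤ c i) (hrel : CRel K a b) :
    (∑ i, a i * c i) * (∑ k, b k) ≤ K * ((∑ i, b i * c i) * (∑ k, a k)) := by
  rw [Finset.sum_mul_sum, Finset.sum_mul_sum, Finset.mul_sum]
  refine Finset.sum_le_sum fun i _ => ?_
  rw [Finset.mul_sum]
  refine Finset.sum_le_sum fun k _ => ?_
  calc a i * c i * b k = c i * (a i * b k) := by ring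
    _ ≤ c i * (K * (a k * b i)) := mul_le_mul_of_nonneg_left (hrel i k) (hc i)
    _ = K * (b i * c i * a k) := by ring

/-- (Contraction inequality, Corollary.) -/
theorem stmt_12 {n : Type*} [Fintype n] [DecidableEq n]
    (m : ℕ) (hm : 1 ≤ m)
    (M T' : ℕ → Matrix n n ℝ) (T : Matrix n n ℝ)
    (hMpos : ∀ ℓ, 1 ≤ ℓ → ℓ ≤ m → ∀ i j, 0 ≤ M ℓ i j)
    (hMne : ∀ ℓ, 1 ≤ ℓ → ℓ ≤ m → M ℓ ≠ 0)
    (hMsr : ∀ ℓ, 1 ≤ ℓ → ℓ ≤ m → Subrectangular (M ℓ))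
    (hT'pos : ∀ ℓ, 1 ≤ ℓ → ℓ ≤ m → ∀ i j, 0 ≤ T' ℓ i j)
    (hT'ne : ∀ ℓ, 1 ≤ ℓ → ℓ ≤ m → T' ℓ ≠ 0)
    (hTpos : ∀ i j, 0 ≤ T i j) (hTne : T ≠ 0)
    (x y : n → ℝ) (hx : ∀ i, 0 ≤ x i) (hy : ∀ i, 0 ≤ y i)
    (hxne : x ≠ 0) (hyne : y ≠ 0)
    (hx1 : 0 < ∑ j, |Matrix.vecMul x (prodTM T' M m * T) j|)
    (hy1 : 0 < ∑ j, |Matrix.vecMul y (prodTM T' M m * T) j|) :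
    Real.log
        ((∑ j, |Matrix.vecMul x (prodTM T' M m * T) j|) /
            (∑ j, |Matrix.vecMul y (prodTM T' M m * T) j|) *
          ((∑ j, |Matrix.vecMul y (prodTM T' M m) j|) /
            (∑ j, |Matrix.vecMul x (prodTM T' M m) j|))) ≤
      4 * Real.log ((1 + tau (M 1)) / (1 - tau (M 1))) *
        ∏ ℓ ∈ Finset.Icc 2 m, tau (M ℓ) := by
  classical
  have hRpos : ∀ s, s ≤ m → ∀ i j, 0 ≤ prodTM T' M s i j := fun s hs =>
    prodTM_nonneg T' M s (fun ℓ h1 h2 => hT'pos ℓ h1 (le_trans h2 hs))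
      (fun ℓ h1 h2 => hMpos ℓ h1 (le_trans h2 hs))
  have hax : ∀ s, s ≤ m → ∀ i, 0 ≤ Matrix.vecMul x (prodTM T' M s) i :=
    fun s hs i => vecMul_nonneg hx (hRpos s hs) i
  have hbx : ∀ s, s ≤ m → ∀ i, 0 ≤ Matrix.vecMul y (prodTM T' M s) i :=
    fun s hs i => vecMul_nonneg hy (hRpos s hs) i
  have hzero : ∀ (z : n → ℝ) (s t : ℕ), s ≤ t → Matrix.vecMul z (prodTM T' M s) = 0 →
      Matrix.vecMul z (prodTM T' M t) = 0 := by
    intro z s t hst h0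
    induction t, hst using Nat.le_induction with
    | base => exact h0
    | succ t ht ih => rw [prodTM_succ, ← Matrix.vecMul_vecMul, ih, Matrix.zero_vecMul]
  have hane : Matrix.vecMul x (prodTM T' M m) ≠ 0 := by
    intro h
    rw [← Matrix.vecMul_vecMul, h, Matrix.zero_vecMul] at hx1
    simp at hx1
  have hbne : Matrix.vecMul y (prodTM T' M m) ≠ 0 := by
    intro h
    rw [← Matrix.vecMul_vecMul, h, Matrix.zero_vecMul] at hy1
    simp at hy1
  have hxs : ∀ s, s ≤ m → Matrix.vecMul x (prodTM T' M s) ≠ 0 :=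
    fun s hs h0 => hane (hzero x s m hs h0)
  have hys : ∀ s, s ≤ m → Matrix.vecMul y (prodTM T' M s) ≠ 0 :=
    fun s hs h0 => hbne (hzero y s m hs h0)
  have main : ∀ s, 1 ≤ s → s ≤ m → ∃ K : ℝ, 1 ≤ K ∧
      Real.log K ≤ Real.log (phi (M 1))⁻¹ * ∏ ℓ ∈ Finset.Icc 2 s, tau (M ℓ) ∧
      CRel K (Matrix.vecMul x (prodTM T' M s)) (Matrix.vecMul y (prodTM T' M s)) := by
    intro s
    induction s with
    | zero => intro h; exact absurd h (by norm_num)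
    | succ t ih =>
      intro _ hsm
      by_cases ht : t = 0
      · subst ht
        have hφpos := phi_pos (hMpos 1 le_rfl hm) (hMne 1 le_rfl hm) (hMsr 1 le_rfl hm)
        refine ⟨(phi (M 1))⁻¹, (one_le_inv₀ hφpos).mpr (phi_le_one (hMne 1 le_rfl hm)), ?_, ?_⟩
        · rw [Finset.Icc_eq_empty (by omega), Finset.prod_empty, mul_one]
        · have h1 : prodTM T' M 1 = T' 1 * M 1 := by
            rw [show (1:ℕ) = 0+1 from rfl, prodTM_succ, prodTM_zero, one_mul]
          rw [h1, ← Matrix.vecMul_vecMul x (T' 1) (M 1), ← Matrix.vecMul_vecMul y (T' 1) (M 1)]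
          exact rel_base (hMpos 1 le_rfl hm) (hMne 1 le_rfl hm) (hMsr 1 le_rfl hm)
            (fun i => vecMul_nonneg hx (hT'pos 1 le_rfl hm) i)
            (fun i => vecMul_nonneg hy (hT'pos 1 le_rfl hm) i)
      · have ht1 : 1 ≤ t := Nat.one_le_iff_ne_zero.mpr ht
        obtain ⟨K, hK1, hKlog, hKrel⟩ := ih ht1 (by omega)
        have htm : t ≤ m := by omega
        have hu : ∀ i, 0 ≤ Matrix.vecMul (Matrix.vecMul x (prodTM T' M t)) (T' (t+1)) i :=
          fun i => vecMul_nonneg (hax t htm) (hT'pos (t+1) (by omega) hsm) i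
        have hv : ∀ i, 0 ≤ Matrix.vecMul (Matrix.vecMul y (prodTM T' M t)) (T' (t+1)) i :=
          fun i => vecMul_nonneg (hbx t htm) (hT'pos (t+1) (by omega) hsm) i
        have hxnext : Matrix.vecMul x (prodTM T' M (t+1))
            = Matrix.vecMul (Matrix.vecMul (Matrix.vecMul x (prodTM T' M t)) (T' (t+1))) (M (t+1)) := by
          rw [prodTM_succ, Matrix.vecMul_vecMul, Matrix.vecMul_vecMul]
        have hynext : Matrix.vecMul y (prodTM T' M (t+1))
            = Matrix.vecMul (Matrix.vecMul (Matrix.vecMul y (prodTM T' M t)) (T' (t+1))) (M (t+1)) := by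
          rw [prodTM_succ, Matrix.vecMul_vecMul, Matrix.vecMul_vecMul]
        have hune : Matrix.vecMul (Matrix.vecMul x (prodTM T' M t)) (T' (t+1)) ≠ 0 := by
          intro h0
          apply hxs (t+1) hsm
          rw [hxnext, h0, Matrix.zero_vecMul]
        have hvne : Matrix.vecMul (Matrix.vecMul y (prodTM T' M t)) (T' (t+1)) ≠ 0 := by
          intro h0
          apply hys (t+1) hsm
          rw [hynext, h0, Matrix.zero_vecMul]
        have relT := rel_matmul (hT'pos (t+1) (by omega) hsm) hKrel
        have relM := crel_step (hMpos (t+1) (by omega) hsm) (hMne (t+1) (by omega) hsm)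
          (hMsr (t+1) (by omega) hsm) hu hv hune hvne hK1 relT
        have hτn := tau_nonneg2 (hMne (t+1) (by omega) hsm)
        refine ⟨K ^ tau (M (t+1)), Real.one_le_rpow hK1 hτn, ?_, ?_⟩
        · rw [Real.log_rpow (lt_of_lt_of_le one_pos hK1)]
          calc tau (M (t+1)) * Real.log K
              ≤ tau (M (t+1)) * (Real.log (phi (M 1))⁻¹ * ∏ ℓ ∈ Finset.Icc 2 t, tau (M ℓ)) :=
                mul_le_mul_of_nonneg_left hKlog hτn
            _ = Real.log (phi (M 1))⁻¹ * ∏ ℓ ∈ Finset.Icc 2 (t+1), tau (M ℓ) := by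
                rw [Finset.prod_Icc_succ_top (by omega)]
                ring
        · rw [hxnext, hynext]
          exact relM
  obtain ⟨K, hK1, hKlog, hKrel⟩ := main m hm le_rfl
  -- absolute values
  have habs : ∀ (z : n → ℝ), (∀ i, 0 ≤ z i) → ∑ j, |z j| = ∑ j, z j :=
    fun z hz => Finset.sum_congr rfl fun j _ => abs_of_nonneg (hz j)
  have hfa : ∑ j, |Matrix.vecMul x (prodTM T' M m * T) j|
      = ∑ j, Matrix.vecMul (Matrix.vecMul x (prodTM T' M m)) T j := by
    rw [Matrix.vecMul_vecMul]
    exact habs _ (fun i => vecMul_nonneg hx (matmul_nonneg (hRpos m le_rfl) hTpos) i)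
  have hfb : ∑ j, |Matrix.vecMul y (prodTM T' M m * T) j|
      = ∑ j, Matrix.vecMul (Matrix.vecMul y (prodTM T' M m)) T j := by
    rw [Matrix.vecMul_vecMul]
    exact habs _ (fun i => vecMul_nonneg hy (matmul_nonneg (hRpos m le_rfl) hTpos) i)
  have hga : ∑ j, |Matrix.vecMul x (prodTM T' M m) j| = ∑ j, Matrix.vecMul x (prodTM T' M m) j :=
    habs _ (fun k => hax m le_rfl k)
  have hgb : ∑ j, |Matrix.vecMul y (prodTM T' M m) j| = ∑ j, Matrix.vecMul y (prodTM T' M m) j :=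
    habs _ (fun k => hbx m le_rfl k)
  have hfapos : 0 < ∑ j, Matrix.vecMul (Matrix.vecMul x (prodTM T' M m)) T j := hfa ▸ hx1
  have hfbpos : 0 < ∑ j, Matrix.vecMul (Matrix.vecMul y (prodTM T' M m)) T j := hfb ▸ hy1
  have hgapos : 0 < ∑ j, Matrix.vecMul x (prodTM T' M m) j := by
    obtain ⟨i, hi⟩ := Function.ne_iff.mp hane
    exact Finset.sum_pos' (fun k _ => hax m le_rfl k)
      ⟨i, Finset.mem_univ i, lt_of_le_of_ne (hax m le_rfl i) (Ne.symm (by simpa using hi))⟩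
  have hgbpos : 0 < ∑ j, Matrix.vecMul y (prodTM T' M m) j := by
    obtain ⟨i, hi⟩ := Function.ne_iff.mp hbne
    exact Finset.sum_pos' (fun k _ => hbx m le_rfl k)
      ⟨i, Finset.mem_univ i, lt_of_le_of_ne (hbx m le_rfl i) (Ne.symm (by simpa using hi))⟩
  -- the core bilinear estimate
  have hexp : ∀ (z : n → ℝ), ∑ j, Matrix.vecMul z T j = ∑ i, z i * ∑ j, T i j := by
    intro z
    simp only [vecMul_apply]
    rw [Finset.sum_comm]
    exact Finset.sum_congr rfl fun i _ => (Finset.mul_sum _ _ _).symm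
  have hcore : (∑ j, Matrix.vecMul (Matrix.vecMul x (prodTM T' M m)) T j)
        * (∑ j, Matrix.vecMul y (prodTM T' M m) j)
      ≤ K * ((∑ j, Matrix.vecMul (Matrix.vecMul y (prodTM T' M m)) T j)
        * (∑ j, Matrix.vecMul x (prodTM T' M m) j)) := by
    rw [hexp, hexp]
    exact bilinear_bound (fun i => Finset.sum_nonneg fun j _ => hTpos i j) hKrel
  have hKpos : (0:ℝ) < K := lt_of_lt_of_le one_pos hK1
  have harg : (∑ j, Matrix.vecMul (Matrix.vecMul x (prodTM T' M m)) T j)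
        / (∑ j, Matrix.vecMul (Matrix.vecMul y (prodTM T' M m)) T j)
        * ((∑ j, Matrix.vecMul y (prodTM T' M m) j) / (∑ j, Matrix.vecMul x (prodTM T' M m) j))
      ≤ K := by
    rw [div_mul_div_comm, div_le_iff₀ (by positivity)]
    linarith [hcore]
  have hargpos : 0 < (∑ j, Matrix.vecMul (Matrix.vecMul x (prodTM T' M m)) T j)
        / (∑ j, Matrix.vecMul (Matrix.vecMul y (prodTM T' M m)) T j)
        * ((∑ j, Matrix.vecMul y (prodTM T' M m) j) / (∑ j, Matrix.vecMul x (prodTM T' M m) j)) := by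
    positivity
  have hτprod : 0 ≤ ∏ ℓ ∈ Finset.Icc 2 m, tau (M ℓ) := by
    apply Finset.prod_nonneg
    intro ℓ hℓ
    rw [Finset.mem_Icc] at hℓ
    exact tau_nonneg2 (hMne ℓ (by omega) hℓ.2)
  have hL : Real.log ((1 + tau (M 1)) / (1 - tau (M 1))) = -(1/2) * Real.log (phi (M 1)) :=
    log_one_add_tau_div (hMpos 1 le_rfl hm) (hMne 1 le_rfl hm) (hMsr 1 le_rfl hm)
  have hLnn : 0 ≤ Real.log ((1 + tau (M 1)) / (1 - tau (M 1))) := by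
    rw [hL]
    have := Real.log_nonpos (phi_pos (hMpos 1 le_rfl hm) (hMne 1 le_rfl hm) (hMsr 1 le_rfl hm)).le
      (phi_le_one (hMne 1 le_rfl hm))
    linarith
  have hlogKRHS : Real.log (phi (M 1))⁻¹
      = 2 * Real.log ((1 + tau (M 1)) / (1 - tau (M 1))) := by
    rw [Real.log_inv, hL]
    ring
  rw [hfa, hfb, hga, hgb]
  calc Real.log ((∑ j, Matrix.vecMul (Matrix.vecMul x (prodTM T' M m)) T j)
        / (∑ j, Matrix.vecMul (Matrix.vecMul y (prodTM T' M m)) T j)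
        * ((∑ j, Matrix.vecMul y (prodTM T' M m) j) / (∑ j, Matrix.vecMul x (prodTM T' M m) j)))
      ≤ Real.log K := (Real.log_le_log_iff hargpos hKpos).mpr harg
    _ ≤ Real.log (phi (M 1))⁻¹ * ∏ ℓ ∈ Finset.Icc 2 m, tau (M ℓ) := hKlog
    _ = 2 * Real.log ((1 + tau (M 1)) / (1 - tau (M 1))) * ∏ ℓ ∈ Finset.Icc 2 m, tau (M ℓ) := by
        rw [hlogKRHS]
    _ ≤ 4 * Real.log ((1 + tau (M 1)) / (1 - tau (M 1))) * ∏ ℓ ∈ Finset.Icc 2 m, tau (M ℓ) := by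
        nlinarith [mul_nonneg hLnn hτprod]
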